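/- Let λ* = (λ₁*,…,λ₆*) ∈ ℂ⁶ satisfy λ₁* = λ₄* = λ₅* = 0, λ₂* ≠ 0, and λ₃* ≠ λ₆* (i.e. λ* is a smooth point of the center set lying on I₃ only). Then the ideal of ℂ[λ₁,…,λ₆] generated by the Kapteyn–Bautin polynomials v₁, v₂, v₃, v₄ and the ideal generated by λ₁, λ₄, λ₅ coincide locally at λ*. -/

import Mathlib

open MvPolynomial

/-- The multiplicative set of polynomials not vanishing at `p`, i.e. the complement of
the maximal ideal of polynomials vanishing at `p`. -/
def nonVanishing (K : Type*) [Field K] (p : Fin 6 → K) :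
    Submonoid (MvPolynomial (Fin 6) K) where
  carrier := {f | eval p f ≠ 0}
  mul_mem' := by
    intro a b ha hb
    simp only [Set.mem_setOf_eq, map_mul] at ha hb ⊢
    exact mul_ne_zero ha hb
  one_mem' := by simp

/-- Two ideals of `K[λ₁,…,λ₆]` coincide locally at `p` if their extensions to the
localization of the polynomial ring at the maximal ideal of polynomials vanishing at `p`
(equivalently, the localization inverting all polynomials not vanishing at `p`) are equal. -/
def coincideLocally (K : Type*) [Field K] (p : Fin 6 → K)
    (I J : Ideal (MvPolynomial (Fin 6) K)) : Prop :=
  Ideal.map (algebraMap (MvPolynomial (Fin 6) K) (Localization (nonVanishing K p))) I =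
  Ideal.map (algebraMap (MvPolynomial (Fin 6) K) (Localization (nonVanishing K p))) J

/-- The Bautin ideal of the Kapteyn normal form, generated by the Kapteyn–Bautin
polynomials `v₁ = λ₁`, `v₂ = λ₅(λ₃−λ₆)`, `v₃ = λ₂λ₄(λ₃−λ₆)(λ₄+5λ₃−5λ₆)`,
`v₄ = λ₂λ₄(λ₃−λ₆)²(λ₃λ₆−2λ₆²−λ₂²)`, where `X 0 = λ₁, …, X 5 = λ₆`. -/
noncomputable def bautinIdeal (K : Type*) [Field K] : Ideal (MvPolynomial (Fin 6) K) :=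
  Ideal.span {X 0, X 4 * (X 2 - X 5),
    X 1 * X 3 * (X 2 - X 5) * (X 3 + 5 * X 2 - 5 * X 5),
    X 1 * X 3 * (X 2 - X 5) ^ 2 * (X 2 * X 5 - 2 * X 5 ^ 2 - X 1 ^ 2)}

lemma key_mem (p : Fin 6 → ℂ) (I : Ideal (MvPolynomial (Fin 6) ℂ))
    (x c a : MvPolynomial (Fin 6) ℂ) (ha : a ∈ I) (heq : a = x * c)
    (hc : eval p c ≠ 0) :
    algebraMap (MvPolynomial (Fin 6) ℂ) (Localization (nonVanishing ℂ p)) x ∈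
      Ideal.map (algebraMap (MvPolynomial (Fin 6) ℂ) (Localization (nonVanishing ℂ p))) I := by
  have hu : IsUnit (algebraMap (MvPolynomial (Fin 6) ℂ) (Localization (nonVanishing ℂ p)) c) :=
    IsLocalization.map_units (M := nonVanishing ℂ p) _ ⟨c, hc⟩
  obtain ⟨u, hu⟩ := hu
  have hx : algebraMap (MvPolynomial (Fin 6) ℂ) (Localization (nonVanishing ℂ p)) x =
      ↑u⁻¹ * algebraMap (MvPolynomial (Fin 6) ℂ) (Localization (nonVanishing ℂ p)) a := by
    rw [heq, map_mul, ← hu, mul_comm _ (u : Localization (nonVanishing ℂ p)), ← mul_assoc,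
      Units.inv_mul, one_mul]
  rw [hx]
  exact Ideal.mul_mem_left _ _ (Ideal.mem_map_of_mem _ ha)

/-- at a smooth point `λ*` of the center set lying on `I₃` only
(`λ₁* = λ₄* = λ₅* = 0`, `λ₂* ≠ 0`, `λ₃* ≠ λ₆*`), the Bautin ideal coincides locally
at `λ*` with the ideal `(λ₁, λ₄, λ₅)`. -/
theorem stmt_6 (l1 l2 l3 l4 l5 l6 : ℂ)
    (h1 : l1 = 0) (h4 : l4 = 0) (h5 : l5 = 0)
    (h2 : l2 ≠ 0) (h36 : l3 ≠ l6) :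
    coincideLocally ℂ ![l1, l2, l3, l4, l5, l6]
      (bautinIdeal ℂ)
      (Ideal.span {X 0, X 3, X 4}) := by
  subst h1 h4 h5
  set p : Fin 6 → ℂ := ![0, l2, l3, 0, 0, l6] with hp
  unfold coincideLocally bautinIdeal
  apply le_antisymm
  · apply Ideal.map_mono
    rw [Ideal.span_le]
    intro f hf
    have h0 : (X 0 : MvPolynomial (Fin 6) ℂ) ∈ Ideal.span {X 0, X 3, X 4} :=
      Ideal.subset_span (by simp)
    have h3 : (X 3 : MvPolynomial (Fin 6) ℂ) ∈ Ideal.span {X 0, X 3, X 4} :=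
      Ideal.subset_span (by simp)
    have h4 : (X 4 : MvPolynomial (Fin 6) ℂ) ∈ Ideal.span {X 0, X 3, X 4} :=
      Ideal.subset_span (by simp)
    simp only [Set.mem_insert_iff, Set.mem_singleton_iff] at hf
    rcases hf with rfl | rfl | rfl | rfl
    · exact h0
    · exact Ideal.mul_mem_right _ _ h4
    · exact Ideal.mul_mem_right _ _ (Ideal.mul_mem_right _ _ (Ideal.mul_mem_left _ _ h3))
    · exact Ideal.mul_mem_right _ _ (Ideal.mul_mem_right _ _ (Ideal.mul_mem_left _ _ h3))
  · rw [Ideal.map_span, Ideal.span_le]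
    rintro g ⟨f, hf, rfl⟩
    simp only [Set.mem_insert_iff, Set.mem_singleton_iff] at hf
    have hp1 : p 1 = l2 := rfl
    have hp2 : p 2 = l3 := rfl
    have hp3 : p 3 = 0 := rfl
    have hp5 : p 5 = l6 := rfl
    have hsub : eval p (X 2 - X 5 : MvPolynomial (Fin 6) ℂ) ≠ 0 := by
      simp [hp2, hp5]
      exact sub_ne_zero.mpr h36
    rcases hf with rfl | rfl | rfl
    · exact Ideal.mem_map_of_mem _ (Ideal.subset_span (by simp))
    · -- X 3 from v3
      apply key_mem p _ _ (X 1 * (X 2 - X 5) * (X 3 + 5 * X 2 - 5 * X 5))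
        (X 1 * X 3 * (X 2 - X 5) * (X 3 + 5 * X 2 - 5 * X 5))
        (Ideal.subset_span (by simp)) (by ring)
      have hev : eval p (X 1 * (X 2 - X 5) * (X 3 + 5 * X 2 - 5 * X 5) :
          MvPolynomial (Fin 6) ℂ) = l2 * (l3 - l6) * (5 * (l3 - l6)) := by
        simp [hp1, hp2, hp3, hp5]
        exact Or.inl (by ring)
      rw [hev]
      exact mul_ne_zero (mul_ne_zero h2 (sub_ne_zero.mpr h36))
        (mul_ne_zero (by norm_num) (sub_ne_zero.mpr h36))
    · apply key_mem p _ _ (X 2 - X 5) (X 4 * (X 2 - X 5))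
        (Ideal.subset_span (by simp)) rfl hsub
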